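/- Let 1 → L → H → K → 1 be a short exact sequence of groups. Then H satisfies a nontrivial group law if and only if both L and K satisfy nontrivial group laws. -/

import Mathlib

/-- A group satisfies a nontrivial group law if some nontrivial reduced word in
finitely many variables evaluates to the identity under every substitution. -/
def SatisfiesLaw (G : Type*) [Group G] : Prop :=
  ∃ (n : ℕ) (w : FreeGroup (Fin n)), w ≠ 1 ∧ ∀ f : Fin n → G, FreeGroup.lift f w = 1

section Auxiliary

open FreeGroup List


variable {α : Type*}

/-- Adjacent letters never cancel. -/
abbrev NoCancel (L : List (α × Bool)) : Prop :=
  L.Chain' fun a b => ¬(a.1 = b.1 ∧ a.2 = !b.2)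

lemma reduce_eq_self_of_noCancel [DecidableEq α] {L : List (α × Bool)}
    (h : NoCancel L) : FreeGroup.reduce L = L := by
  induction L with
  | nil => rfl
  | cons x L ih =>
    obtain ⟨h1, h2⟩ := List.isChain_cons.mp h
    rw [FreeGroup.reduce.cons, ih h2]
    cases L with
    | nil => rfl
    | cons hd tl =>
      show (if x.1 = hd.1 ∧ x.2 = !hd.2 then tl else x :: hd :: tl) = x :: hd :: tl
      rw [if_neg (h1 hd (by simp))]

lemma noCancel_reduce [DecidableEq α] (L : List (α × Bool)) : NoCancel (FreeGroup.reduce L) := by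
  induction L with
  | nil => exact List.isChain_nil
  | cons x L ih =>
    rw [FreeGroup.reduce.cons]
    cases hL : FreeGroup.reduce L with
    | nil => exact List.isChain_singleton _
    | cons hd tl =>
      rw [hL] at ih
      show NoCancel (if x.1 = hd.1 ∧ x.2 = !hd.2 then tl else x :: hd :: tl)
      by_cases hc : x.1 = hd.1 ∧ x.2 = !hd.2
      · rw [if_pos hc]; exact ih.tail
      · rw [if_neg hc]
        refine ih.cons fun y hy => ?_
        have : y = hd := by
          have h' := hy; simp only [List.head?_cons, Option.mem_def, Option.some.injEq] at h'
          exact h'.symm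
        subst this
        exact hc

lemma noCancel_toWord [DecidableEq α] (x : FreeGroup α) : NoCancel x.toWord := by
  rw [← FreeGroup.reduce_toWord]
  exact noCancel_reduce _

lemma chain'_replicate_of_rel' {β : Type*} {R : β → β → Prop} {a : β} (h : R a a) (n : ℕ) :
    List.Chain' R (List.replicate n a) := by
  induction n with
  | zero => exact List.isChain_nil
  | succ n ih =>
    rw [List.replicate_succ]
    refine List.isChain_cons.mpr ⟨fun y hy => ?_, ih⟩
    have := List.eq_of_mem_replicate (List.mem_of_mem_head? hy)
    subst this; exact h

/-- cyclically reduced decomposition -/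
lemma exists_conj_cyclRed [DecidableEq α] :
    ∀ (N : ℕ) (x : FreeGroup α), x.norm ≤ N →
    ∃ y c : FreeGroup α, x = y * c * y⁻¹ ∧ (x ≠ 1 → c ≠ 1) ∧
      ∀ a ∈ c.toWord.head?, ∀ b ∈ c.toWord.getLast?, ¬(b.1 = a.1 ∧ b.2 = !a.2) := by
  intro N
  induction N using Nat.strong_induction_on with
  | _ N ih =>
    intro x hx
    by_cases hcyc : ∀ a ∈ x.toWord.head?, ∀ b ∈ x.toWord.getLast?, ¬(b.1 = a.1 ∧ b.2 = !a.2)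
    · exact ⟨1, x, by group, fun h => h, hcyc⟩
    · push_neg at hcyc
      obtain ⟨a0, ha, b0, hb, hab⟩ := hcyc
      cases hLw : x.toWord with
      | nil => rw [hLw] at ha; simp at ha
      | cons a L' =>
        rw [hLw] at ha hb
        have ha' : a0 = a := (by simpa using ha : a = a0).symm
        subst ha'
        rcases L'.eq_nil_or_concat with rfl | ⟨M, b', rfl⟩
        · have hb' : b0 = a0 := (by simpa using hb : a0 = b0).symm
          subst hb'
          simp at hab
        · rw [List.concat_eq_append] at hLw hb
          have hb' : b0 = b' := by
            have hgl : (a0 :: (M ++ [b'])).getLast? = some b' := by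
              rw [← List.cons_append, List.getLast?_concat]
            rw [hgl] at hb
            exact (by simpa using hb : b' = b0).symm
          subst hb'
          have hb'a : b0 = (a0.1, !a0.2) := Prod.ext hab.1 hab.2
          set z := FreeGroup.mk [a0] with hz
          set x' := FreeGroup.mk M with hx'
          have hxz : x = z * x' * z⁻¹ := by
            have hinv : z⁻¹ = FreeGroup.mk [b0] := by
              rw [hz, FreeGroup.inv_mk]
              congr 1
              simp [FreeGroup.invRev, hb'a]
            rw [hinv, hz, hx', FreeGroup.mul_mk, FreeGroup.mul_mk, ← FreeGroup.mk_toWord (x := x),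
              hLw]
            simp
          have hMred : x'.toWord = M := by
            have hNC : NoCancel M := by
              have hh := noCancel_toWord x
              rw [hLw] at hh
              exact hh.infix ⟨[a0], [b0], by simp⟩
            rw [hx', FreeGroup.toWord_mk, reduce_eq_self_of_noCancel hNC]
          have hnorm : x'.norm < N := by
            have h1 : x.norm = M.length + 2 := by
              rw [FreeGroup.norm, hLw]
              simp
            have h2 : x'.norm = M.length := by rw [FreeGroup.norm, hMred]
            omega
          obtain ⟨y, c, hyc, hne, hcyc'⟩ := ih x'.norm hnorm x' le_rfl
          refine ⟨z * y, c, ?_, ?_, hcyc'⟩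
          · rw [hxz, hyc]; group
          · intro hx1
            refine hne fun hx'1 => hx1 ?_
            rw [hxz, hx'1]
            group

lemma freeGroup_pow_ne_one {x : FreeGroup α} (hx : x ≠ 1) {n : ℕ} (hn : n ≠ 0) : x ^ n ≠ 1 := by
  classical
  obtain ⟨y, c, hxe, hne, hcyc⟩ := exists_conj_cyclRed x.norm x le_rfl
  have hc : c ≠ 1 := hne hx
  have hLne : c.toWord ≠ [] := fun h => hc (FreeGroup.toWord_eq_nil_iff.mp h)
  have hcpow : c ^ n ≠ 1 := by
    have hpow : c ^ n = FreeGroup.mk (List.flatten (List.replicate n c.toWord)) := by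
      conv_lhs => rw [← FreeGroup.mk_toWord (x := c)]
      exact FreeGroup.pow_mk n
    have hNC : NoCancel (List.flatten (List.replicate n c.toWord)) := by
      refine (List.isChain_flatten (L := List.replicate n c.toWord) (by
        intro hmem
        exact hLne (List.eq_of_mem_replicate hmem).symm)).mpr ⟨fun l hl => ?_, ?_⟩
      · rw [List.eq_of_mem_replicate hl]; exact noCancel_toWord c
      · exact chain'_replicate_of_rel' (fun p hp q hq => hcyc q hq p hp) n
    have htw : (c ^ n).toWord = List.flatten (List.replicate n c.toWord) := by
      rw [hpow, FreeGroup.toWord_mk, reduce_eq_self_of_noCancel hNC]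
    intro h1
    rw [h1, FreeGroup.toWord_one] at htw
    have hlen := congrArg List.length htw
    simp only [List.length_nil, List.length_flatten, List.map_replicate, List.sum_replicate,
      smul_eq_mul] at hlen
    rcases Nat.mul_eq_zero.mp hlen.symm with h | h
    · exact hn h
    · exact hLne (List.length_eq_zero_iff.mp h)
  intro h1
  apply hcpow
  have h2 : y⁻¹ * (x ^ n) * y = c ^ n := by
    rw [hxe, conj_pow]
    group
  rw [h1] at h2
  simpa using h2.symm

lemma freeGroup_zpow_eq_one {x : FreeGroup α} (hx : x ≠ 1) {k : ℤ} (hk : x ^ k = 1) : k = 0 := by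
  rcases Int.natAbs_eq k with h | h
  · by_contra hk0
    refine freeGroup_pow_ne_one hx (n := k.natAbs) (by omega) ?_
    rw [← zpow_natCast, ← h, hk]
  · by_contra hk0
    refine freeGroup_pow_ne_one hx (n := k.natAbs) (by omega) ?_
    have : x ^ (-k) = 1 := by rw [zpow_neg, hk, inv_one]
    rw [← zpow_natCast, show ((k.natAbs : ℤ)) = -k by omega, this]

lemma lift_const_injective {β : Type*} {v : FreeGroup β} (hv : v ≠ 1) :
    Function.Injective (FreeGroup.lift (fun _ : Unit => v)) := by
  rw [injective_iff_map_eq_one]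
  intro x hx1
  have hrep : x = FreeGroup.of () ^ (FreeGroup.freeGroupUnitEquivInt x) :=
    (FreeGroup.freeGroupUnitEquivInt.symm_apply_apply x).symm
  have : FreeGroup.lift (fun _ : Unit => v) x = v ^ (FreeGroup.freeGroupUnitEquivInt x) := by
    conv_lhs => rw [hrep]
    simp [_root_.map_zpow]
  rw [this] at hx1
  rw [hrep, freeGroup_zpow_eq_one hv hx1, zpow_zero]

open Monoid in
lemma coprodI_lift_of_comp_injective {ι : Type*} {M N : ι → Type*}
    [∀ i, Group (M i)] [∀ i, Group (N i)]
    (φ : ∀ i, M i →* N i) (hφ : ∀ i, Function.Injective (φ i)) :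
    Function.Injective (CoprodI.lift fun i => (CoprodI.of (M := N)).comp (φ i)) := by
  classical
  set ψ := CoprodI.lift fun i => (CoprodI.of (M := N)).comp (φ i) with hψ
  rw [injective_iff_map_eq_one]
  intro x hx
  set w : CoprodI.Word M := CoprodI.Word.equiv x with hw
  have hxw : x = w.prod := by
    rw [hw]
    exact (CoprodI.Word.equiv.symm_apply_apply x).symm
  set w' : CoprodI.Word N :=
    { toList := w.toList.map fun l => ⟨l.1, φ l.1 l.2⟩
      ne_one := by
        intro l' hl'
        obtain ⟨l, hl, rfl⟩ := List.mem_map.mp hl'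
        exact fun h => w.ne_one l hl ((hφ l.1) (h.trans (_root_.map_one (φ l.1)).symm))
      chain_ne := by
        refine (List.isChain_map _).mpr ?_
        exact w.chain_ne.imp (fun {a b} h => h) } with hw'
  -- see below
  have hprod : w'.prod = ψ x := by
    rw [hxw, CoprodI.Word.prod, CoprodI.Word.prod, map_list_prod, List.map_map, List.map_map]
    congr 1
  have hw'empty : w' = CoprodI.Word.empty := by
    apply CoprodI.Word.equiv.symm.injective
    show w'.prod = CoprodI.Word.prod CoprodI.Word.empty
    rw [hprod, hx, CoprodI.Word.prod_empty]
  have : w.toList = [] := by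
    have := congrArg CoprodI.Word.toList hw'empty
    simpa [hw'] using this
  rw [hxw]
  have : w = CoprodI.Word.empty := CoprodI.Word.ext this
  rw [this, CoprodI.Word.prod_empty]

lemma liftComp {β G G' : Type*} [Group G] [Group G'] (g : G →* G') (f : β → G) (x : FreeGroup β) :
    g (FreeGroup.lift f x) = FreeGroup.lift (fun a => g (f a)) x := by
  have h : g.comp (FreeGroup.lift f) = FreeGroup.lift (fun a => g (f a)) := by
    apply FreeGroup.ext_hom
    intro a
    simp
  exact DFunLike.congr_fun h x

end Auxiliary

open FreeGroup List in
/-- For a short exact sequence `1 → L → H → K → 1`, the middle group satisfies a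
nontrivial law iff both `L` and `K` do. -/
theorem satisfiesLaw_of_shortExactSeq
    {L H K : Type*} [Group L] [Group H] [Group K]
    (ι : L →* H) (π : H →* K) (hι : Function.Injective ι)
    (hπ : Function.Surjective π) (hexact : ι.range = π.ker) :
    SatisfiesLaw H ↔ (SatisfiesLaw L ∧ SatisfiesLaw K) := by
  constructor
  · rintro ⟨n, w, hw, hlaw⟩
    constructor
    · refine ⟨n, w, hw, fun f => hι ?_⟩
      rw [_root_.map_one, liftComp]
      exact hlaw _
    · refine ⟨n, w, hw, fun f => ?_⟩
      choose g hg using fun i => hπ (f i)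
      have : f = fun i => π (g i) := funext fun i => (hg i).symm
      rw [this, ← liftComp, hlaw, _root_.map_one]
  · rintro ⟨⟨m, u, hu, hLu⟩, ⟨n, v, hv, hKv⟩⟩
    -- the inner words
    set vb : Fin m → FreeGroup (Fin m × Fin n) :=
      fun i => FreeGroup.lift (fun j => FreeGroup.of (i, j)) v with hvb
    set W : FreeGroup (Fin m × Fin n) := FreeGroup.lift vb u with hW
    -- W is nontrivial
    have hWne : W ≠ 1 := by
      set ψ : Monoid.CoprodI (fun _ : Fin m => FreeGroup Unit) →*
          Monoid.CoprodI (fun _ : Fin m => FreeGroup (Fin n)) :=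
        Monoid.CoprodI.lift fun _ => Monoid.CoprodI.of.comp (FreeGroup.lift fun _ : Unit => v)
        with hψ
      have hψinj : Function.Injective ψ :=
        coprodI_lift_of_comp_injective _ (fun _ => lift_const_injective hv)
      set Φ : FreeGroup (Fin m × Fin n) →* Monoid.CoprodI (fun _ : Fin m => FreeGroup (Fin n)) :=
        FreeGroup.lift fun p => Monoid.CoprodI.of (i := p.1) (FreeGroup.of p.2) with hΦ
      have key : Φ W = ψ (freeGroupEquivCoprodI u) := by
        rw [hW, liftComp]
        have h1 : ∀ i, Φ (vb i) = Monoid.CoprodI.of (i := i) v := by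
          intro i
          rw [hvb, liftComp]
          have : (fun j => Φ (FreeGroup.of (i, j))) =
              fun j => Monoid.CoprodI.of (i := i) (FreeGroup.of j) := by
            funext j
            simp [hΦ]
          rw [this]
          conv_rhs => rw [← FreeGroup.lift_of_apply v]
          exact (liftComp (Monoid.CoprodI.of (M := fun _ : Fin m => FreeGroup (Fin n)) (i := i))
            FreeGroup.of v).symm
        have h2 : (freeGroupEquivCoprodI (ι := Fin m)) u =
            FreeGroup.lift (fun i => Monoid.CoprodI.of (i := i) (FreeGroup.of ())) u := rfl
        rw [h2, liftComp]
        have h3 : (fun a : Fin m => Φ (vb a)) =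
            fun a : Fin m => ψ (Monoid.CoprodI.of (i := a) (FreeGroup.of ())) := by
          funext i
          rw [h1 i, hψ]
          simp [Monoid.CoprodI.lift_of]
        rw [h3]
      intro hW1
      apply hu
      have h4 : ψ (freeGroupEquivCoprodI u) = 1 := by rw [← key, hW1, _root_.map_one]
      have h3 : (freeGroupEquivCoprodI (ι := Fin m)) u = 1 := by
        apply hψinj
        rw [h4, _root_.map_one]
      exact (freeGroupEquivCoprodI (ι := Fin m)).injective
        (h3.trans (_root_.map_one (freeGroupEquivCoprodI (ι := Fin m))).symm)
    -- W is a law for H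
    have hWlaw : ∀ g : Fin m × Fin n → H, FreeGroup.lift g W = 1 := by
      intro g
      rw [hW, liftComp]
      have hker : ∀ i, FreeGroup.lift g (vb i) ∈ π.ker := by
        intro i
        rw [MonoidHom.mem_ker, hvb, liftComp, liftComp]
        exact hKv _
      have hrange : ∀ i, ∃ l : L, ι l = FreeGroup.lift g (vb i) := by
        intro i
        have := hker i
        rw [← hexact] at this
        exact this
      choose l hl using hrange
      have : (fun i => FreeGroup.lift g (vb i)) = fun i => ι (l i) := by
        funext i; rw [hl]
      rw [this, ← liftComp, hLu, _root_.map_one]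
    -- transport along Fin m × Fin n ≃ Fin (m * n)
    refine ⟨m * n, FreeGroup.freeGroupCongr finProdFinEquiv W, ?_, ?_⟩
    · intro h1
      exact hWne ((FreeGroup.freeGroupCongr finProdFinEquiv).injective (by rw [h1, _root_.map_one]))
    · intro f
      have hcomp : (FreeGroup.lift f).comp (FreeGroup.freeGroupCongr finProdFinEquiv).toMonoidHom =
          FreeGroup.lift (fun p => f (finProdFinEquiv p)) := by
        apply FreeGroup.ext_hom
        intro a
        simp
      have : FreeGroup.lift f (FreeGroup.freeGroupCongr finProdFinEquiv W) =
          FreeGroup.lift (fun p => f (finProdFinEquiv p)) W := DFunLike.congr_fun hcomp W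
      rw [this]
      exact hWlaw _
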